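/- arXiv:2204.02879 — 2 statements merged into one kernel-verified Lean document; each statement's English description precedes it below -/
import Mathlib

section
/- For any positive integers n and d, the number of partitions with perimeter n all of whose parts are congruent to 1 modulo d+1 equals the number of partitions with perimeter n in which any two consecutive parts differ by at least d. -/
/-- A partition: a nonempty weakly decreasing list of positive integers. -/
def IsPartition (l : List ℕ) : Prop :=
  l ≠ [] ∧ l.Pairwise (· ≥ ·) ∧ ∀ x ∈ l, 0 < x

/-- The perimeter of a partition: largest part plus number of parts minus 1. -/
def perim (l : List ℕ) : ℕ := l.headI + l.length - 1

/-- Number of repeated parts: indices i with λ_i = λ_{i+1}. -/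
def repStat (l : List ℕ) : ℕ :=
  ((List.range (l.length - 1)).filter fun i => l.getD i 0 = l.getD (i + 1) 0).length

/-- Number of even parts. -/
def evenStat (l : List ℕ) : ℕ := l.countP fun x => x % 2 = 0

/-! ### Auxiliary basic lemmas -/

lemma FT.getD_map_range {f : ℕ → ℕ} {L t : ℕ} (h : t < L) :
    ((List.range L).map f).getD t 0 = f t := by
  rw [List.getD_eq_getElem _ _ (by simpa using h)]
  simp

lemma FT.headI_mem {l : List ℕ} (h : l ≠ []) : l.headI ∈ l := by
  cases l with
  | nil => simp at h
  | cons a t => simp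

lemma FT.mem_le_headI {l : List ℕ} (hs : l.Pairwise (· ≥ ·)) {x : ℕ} (hx : x ∈ l) :
    x ≤ l.headI := by
  cases l with
  | nil => simp at hx
  | cons a t =>
    rcases List.mem_cons.1 hx with h | h
    · simp [h]
    · exact List.rel_of_pairwise_cons hs h

lemma FT.sorted_of_adjacent {l : List ℕ}
    (h : ∀ i, i + 1 < l.length → l.getD (i+1) 0 ≤ l.getD i 0) :
    l.Pairwise (· ≥ ·) := by
  rw [← List.isChain_iff_pairwise, List.isChain_iff_getElem]
  intro i hi
  have hi1 : i + 1 < l.length := by omega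
  have := h i hi1
  rwa [List.getD_eq_getElem _ _ hi1, List.getD_eq_getElem _ _ (by omega)] at this

lemma FT.sorted_adjacent {l : List ℕ} (hs : l.Pairwise (· ≥ ·)) :
    ∀ i, i + 1 < l.length → l.getD (i+1) 0 ≤ l.getD i 0 := by
  intro i hi
  have hc := (List.isChain_iff_pairwise.2 hs)
  rw [List.isChain_iff_getElem] at hc
  have := hc i (by omega)
  rw [List.getD_eq_getElem _ _ hi, List.getD_eq_getElem _ _ (by omega : i < l.length)]
  exact this

lemma FT.countP_range_min (a b : ℕ) :
    (List.range b).countP (fun i => decide (i + 1 ≤ a)) = min a b := by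
  induction b with
  | zero => simp
  | succ b ih =>
    rw [List.range_succ, List.countP_append, ih]
    by_cases h : b + 1 ≤ a <;> simp [h] <;> split_ifs <;> omega

lemma FT.headI_eq_getD {l : List ℕ} (h : l ≠ []) : l.headI = l.getD 0 0 := by
  cases l with
  | nil => simp at h
  | cons a t => simp

lemma FT.getD_mem {l : List ℕ} {t : ℕ} (h : t < l.length) : l.getD t 0 ∈ l := by
  rw [List.getD_eq_getElem _ _ h]; exact List.getElem_mem _

lemma FT.duality {l : List ℕ} (hs : l.Pairwise (· ≥ ·)) (v j : ℕ) (hj : j < l.length) :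
    (j + 1 ≤ l.countP (fun x => decide (v ≤ x))) ↔ v ≤ l.getD j 0 := by
  induction l generalizing j with
  | nil => simp at hj
  | cons a t ih =>
    have hta : ∀ y ∈ t, y ≤ a := fun y hy => List.rel_of_pairwise_cons hs hy
    have hts : t.Pairwise (· ≥ ·) := hs.of_cons
    rw [List.countP_cons]
    have h0 : ¬ v ≤ a → t.countP (fun x => decide (v ≤ x)) = 0 := by
      intro hva
      rw [List.countP_eq_zero]
      intro x hx
      simp only [decide_eq_true_eq]
      exact fun hvx => hva (hvx.trans (hta x hx))
    cases j with
    | zero =>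
      simp only [List.getD_cons_zero]
      by_cases hva : v ≤ a
      · simp [hva]
      · have hd : (if (decide (v ≤ a)) = true then 1 else 0) = 0 := by simp [hva]
        rw [hd, h0 hva]
        constructor
        · omega
        · intro h; exact absurd h hva
    | succ j =>
      simp only [List.getD_cons_succ]
      have hjt : j < t.length := by simpa using hj
      by_cases hva : v ≤ a
      · simp only [hva, decide_true, if_true]
        rw [← ih hts j hjt]
        omega
      · have h2 : ¬ v ≤ t.getD j 0 := by
          intro hv
          have : t.getD j 0 ∈ t := by
            rw [List.getD_eq_getElem _ _ hjt]; exact List.getElem_mem _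
          exact hva (hv.trans ((hta _ this).trans le_rfl))
        have hd : (if (decide (v ≤ a)) = true then 1 else 0) = 0 := by simp [hva]
        rw [hd, h0 hva]
        constructor
        · omega
        · intro h; exact absurd h h2

/-! ### Conjugation -/

/-- Conjugate of a partition given as a sorted list. -/
def FT.conjL (l : List ℕ) : List ℕ :=
  (List.range l.headI).map (fun i => l.countP (fun x => decide (i + 1 ≤ x)))

namespace FT

lemma headI_pos {l : List ℕ} (h : IsPartition l) : 0 < l.headI :=
  h.2.2 _ (headI_mem h.1)

lemma conjL_length (l : List ℕ) : (conjL l).length = l.headI := by simp [conjL]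

lemma conjL_getD {l : List ℕ} {i : ℕ} (h : i < l.headI) :
    (conjL l).getD i 0 = l.countP (fun x => decide (i + 1 ≤ x)) :=
  getD_map_range h

lemma conjL_ne {l : List ℕ} (h : IsPartition l) : conjL l ≠ [] := by
  have h0 : 0 < l.headI := headI_pos h
  have := conjL_length l
  intro hc; rw [hc] at this; simp at this; omega

lemma conjL_headI {l : List ℕ} (h : IsPartition l) : (conjL l).headI = l.length := by
  have h0 : 0 < l.headI := headI_pos h
  rw [headI_eq_getD (conjL_ne h), conjL_getD h0]
  rw [List.countP_eq_length.2]
  intro x hx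
  simpa [Nat.succ_le_iff] using h.2.2 x hx

lemma conjL_isPartition {l : List ℕ} (h : IsPartition l) : IsPartition (conjL l) := by
  have h0 : 0 < l.headI := headI_pos h
  refine ⟨conjL_ne h, ?_, ?_⟩
  · apply sorted_of_adjacent
    intro i hi
    rw [conjL_length] at hi
    rw [conjL_getD (by omega), conjL_getD (by omega : i < l.headI)]
    apply List.countP_mono_left
    intro x hx
    simp only [decide_eq_true_eq]
    omega
  · intro x hx
    rw [conjL, List.mem_map] at hx
    obtain ⟨i, hi, rfl⟩ := hx
    rw [List.mem_range] at hi
    have hm : l.headI ∈ l := headI_mem h.1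
    have hcount : 0 < l.countP (fun x => decide (i + 1 ≤ x)) := by
      rw [List.countP_pos_iff]
      exact ⟨l.headI, hm, by simp; omega⟩
    exact hcount

lemma conjL_conjL {l : List ℕ} (h : IsPartition l) : conjL (conjL l) = l := by
  have hlen : (conjL (conjL l)).length = l.length := by
    rw [conjL_length, conjL_headI h]
  apply List.ext_getElem hlen
  intro j h1 h2
  have hj : j < l.length := h2
  have hjh : j < (conjL l).headI := by rw [conjL_headI h]; exact hj
  rw [← List.getD_eq_getElem _ 0 h1, ← List.getD_eq_getElem _ 0 h2]
  rw [conjL_getD hjh]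
  unfold conjL
  rw [List.countP_map]
  have hcongr : ∀ i ∈ List.range l.headI,
      (((fun c => decide (j + 1 ≤ c)) ∘ fun i => l.countP (fun x => decide (i + 1 ≤ x))) i = true)
      ↔ ((fun i => decide (i + 1 ≤ l.getD j 0)) i = true) := by
    intro i _
    simp only [Function.comp, decide_eq_true_eq]
    exact duality h.2.1 (i+1) j hj
  rw [List.countP_congr hcongr, countP_range_min]
  have : l.getD j 0 ≤ l.headI := by
    apply mem_le_headI h.2.1
    exact getD_mem hj
  omega

/-! ### Staircase maps -/

/-- add staircase with step d -/
def stair (d : ℕ) (c : List ℕ) : List ℕ :=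
  (List.range c.length).map (fun t => c.getD t 0 + d * (c.length - 1 - t))

def destair (d : ℕ) (l : List ℕ) : List ℕ :=
  (List.range l.length).map (fun t => l.getD t 0 - d * (l.length - 1 - t))

lemma stair_length (d : ℕ) (c : List ℕ) : (stair d c).length = c.length := by simp [stair]
lemma destair_length (d : ℕ) (l : List ℕ) : (destair d l).length = l.length := by simp [destair]

lemma stair_getD {d : ℕ} {c : List ℕ} {t : ℕ} (h : t < c.length) :
    (stair d c).getD t 0 = c.getD t 0 + d * (c.length - 1 - t) := getD_map_range h

lemma destair_getD {d : ℕ} {l : List ℕ} {t : ℕ} (h : t < l.length) :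
    (destair d l).getD t 0 = l.getD t 0 - d * (l.length - 1 - t) := getD_map_range h

/-- key lower bound for gap-d partitions -/
lemma gap_lower {d : ℕ} {l : List ℕ} (hpos : ∀ x ∈ l, 0 < x)
    (hgap : ∀ i, i + 1 < l.length → l.getD (i + 1) 0 + d ≤ l.getD i 0) :
    ∀ k t, t + k + 1 = l.length → d * k + 1 ≤ l.getD t 0 := by
  intro k
  induction k with
  | zero =>
    intro t ht
    have := hpos _ (getD_mem (show t < l.length by omega))
    omega
  | succ k ih =>
    intro t ht
    have h1 := hgap t (by omega)
    have h2 := ih (t+1) (by omega)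
    have : d * (k+1) = d * k + d := by ring
    omega

lemma stair_gap {d : ℕ} {c : List ℕ} (hs : c.Pairwise (· ≥ ·)) :
    ∀ i, i + 1 < (stair d c).length →
      (stair d c).getD (i+1) 0 + d ≤ (stair d c).getD i 0 := by
  intro i hi
  rw [stair_length] at hi
  rw [stair_getD (by omega : i < c.length), stair_getD (by omega : i + 1 < c.length)]
  have hadj := sorted_adjacent hs i hi
  have hm : d * (c.length - 1 - i) = d * (c.length - 1 - (i+1)) + d := by
    have : c.length - 1 - i = (c.length - 1 - (i+1)) + 1 := by omega
    rw [this, Nat.mul_succ]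
  omega

lemma stair_destair {d : ℕ} {l : List ℕ} (hpos : ∀ x ∈ l, 0 < x)
    (hgap : ∀ i, i + 1 < l.length → l.getD (i + 1) 0 + d ≤ l.getD i 0) :
    stair d (destair d l) = l := by
  apply List.ext_getElem (by rw [stair_length, destair_length])
  intro t h1 h2
  rw [stair_length, destair_length] at h1
  rw [← List.getD_eq_getElem _ 0, ← List.getD_eq_getElem _ 0 h2]
  rw [stair_getD (by rw [destair_length]; exact h1), destair_length,
    destair_getD h1]
  have := gap_lower hpos hgap (l.length - 1 - t) t (by omega)
  omega

lemma destair_stair {d : ℕ} {c : List ℕ} : destair d (stair d c) = c := by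
  apply List.ext_getElem (by rw [destair_length, stair_length])
  intro t h1 h2
  rw [destair_length, stair_length] at h1
  rw [← List.getD_eq_getElem _ 0, ← List.getD_eq_getElem _ 0 h2]
  rw [destair_getD (by rw [stair_length]; exact h1), stair_length, stair_getD h1]
  omega

lemma stair_headI {d : ℕ} {c : List ℕ} (h : c ≠ []) :
    (stair d c).headI = c.headI + d * (c.length - 1) := by
  have hl : 0 < c.length := List.length_pos_iff.2 h
  have hne : stair d c ≠ [] := by
    intro hc
    have := stair_length d c
    rw [hc] at this; simp at this; omega
  rw [headI_eq_getD hne, headI_eq_getD h, stair_getD hl]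
  simp

lemma destair_headI {d : ℕ} {l : List ℕ} (h : l ≠ []) :
    (destair d l).headI = l.headI - d * (l.length - 1) := by
  have hl : 0 < l.length := List.length_pos_iff.2 h
  have hne : destair d l ≠ [] := by
    intro hc
    have := destair_length d l
    rw [hc] at this; simp at this; omega
  rw [headI_eq_getD hne, headI_eq_getD h, destair_getD hl]
  simp

/-! ### Scaling maps -/

def qmap (d : ℕ) (l : List ℕ) : List ℕ := l.map (fun x => x / (d+1) + 1)

def unq (d : ℕ) (l : List ℕ) : List ℕ := l.map (fun y => (d+1) * (y-1) + 1)

lemma headI_map {f : ℕ → ℕ} {l : List ℕ} (h : l ≠ []) : (l.map f).headI = f l.headI := by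
  cases l with
  | nil => simp at h
  | cons a t => simp

lemma sorted_map {f : ℕ → ℕ} (hf : ∀ a b : ℕ, b ≤ a → f b ≤ f a) {l : List ℕ}
    (hs : l.Pairwise (· ≥ ·)) : (l.map f).Pairwise (· ≥ ·) :=
  List.Pairwise.map f (fun _ _ hab => hf _ _ hab) hs

end FT

open FT in
theorem fu_tang_perimeter (n d : ℕ) (hn : 1 ≤ n) (hd : 1 ≤ d) :
    {l : List ℕ | IsPartition l ∧ perim l = n ∧ ∀ x ∈ l, x % (d + 1) = 1}.ncard =
    {l : List ℕ | IsPartition l ∧ perim l = n ∧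
      ∀ i, i + 1 < l.length → l.getD (i + 1) 0 + d ≤ l.getD i 0}.ncard := by
  set setA := {l : List ℕ | IsPartition l ∧ perim l = n ∧ ∀ x ∈ l, x % (d + 1) = 1} with hA
  set setB := {l : List ℕ | IsPartition l ∧ perim l = n ∧
      ∀ i, i + 1 < l.length → l.getD (i + 1) 0 + d ≤ l.getD i 0} with hB
  set setC := {c : List ℕ | IsPartition c ∧ (d+1) * (c.length - 1) + c.headI = n} with hC
  set setC' := {a : List ℕ | IsPartition a ∧ (d+1) * (a.headI - 1) + a.length = n} with hC'
  -- qmap : setA → setC'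
  have qmap_mem : ∀ l ∈ setA, qmap d l ∈ setC' := by
    rintro l ⟨⟨hne, hs, hpos⟩, hper, hmod⟩
    have hlen : 1 ≤ l.length := List.length_pos_iff.2 hne
    have hh1 : 0 < l.headI := hpos _ (headI_mem hne)
    have hhm : l.headI % (d+1) = 1 := hmod _ (headI_mem hne)
    refine ⟨⟨by simp [qmap, hne], ?_, ?_⟩, ?_⟩
    · exact sorted_map (fun a b hba => by
        have := Nat.div_le_div_right (c := d+1) hba; omega) hs
    · intro x hx
      rw [qmap, List.mem_map] at hx
      obtain ⟨y, _, rfl⟩ := hx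
      exact Nat.succ_pos _
    · rw [qmap, headI_map hne, List.length_map]
      have hdm := Nat.div_add_mod l.headI (d+1)
      rw [hhm] at hdm
      simp only [perim] at hper
      have : l.headI / (d+1) + 1 - 1 = l.headI / (d+1) := by simp
      rw [this]
      omega
  -- unq : setC' → setA
  have unq_mem : ∀ a ∈ setC', unq d a ∈ setA := by
    rintro a ⟨⟨hne, hs, hpos⟩, hcon⟩
    have hlen : 1 ≤ a.length := List.length_pos_iff.2 hne
    have hh1 : 0 < a.headI := hpos _ (headI_mem hne)
    refine ⟨⟨by simp [unq, hne], ?_, ?_⟩, ?_, ?_⟩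
    · exact sorted_map (fun p q hqp => by
        have h1 : q - 1 ≤ p - 1 := by omega
        have := Nat.mul_le_mul_left (d+1) h1
        omega) hs
    · intro x hx
      rw [unq, List.mem_map] at hx
      obtain ⟨y, _, rfl⟩ := hx
      omega
    · simp only [perim, unq, List.length_map, headI_map hne]
      omega
    · intro x hx
      rw [unq, List.mem_map] at hx
      obtain ⟨y, _, rfl⟩ := hx
      have : (d+1) * (y-1) + 1 = 1 + (y-1) * (d+1) := by ring
      rw [this, Nat.add_mul_mod_self_right]
      exact Nat.mod_eq_of_lt (by omega)
  have unq_qmap : ∀ l ∈ setA, unq d (qmap d l) = l := by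
    rintro l ⟨⟨hne, hs, hpos⟩, hper, hmod⟩
    rw [qmap, unq, List.map_map]
    have : ∀ x ∈ l, ((fun y => (d+1) * (y-1) + 1) ∘ fun x => x / (d+1) + 1) x = id x := by
      intro x hx
      have hdm := Nat.div_add_mod x (d+1)
      rw [hmod x hx] at hdm
      simp only [Function.comp, id]
      have : x / (d+1) + 1 - 1 = x / (d+1) := by simp
      rw [this]
      omega
    rw [List.map_congr_left this, List.map_id]
  have qmap_unq : ∀ a ∈ setC', qmap d (unq d a) = a := by
    rintro a ⟨⟨hne, hs, hpos⟩, hcon⟩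
    rw [qmap, unq, List.map_map]
    have : ∀ y ∈ a, ((fun x => x / (d+1) + 1) ∘ fun y => (d+1) * (y-1) + 1) y = id y := by
      intro y hy
      have hy1 : 0 < y := hpos y hy
      simp only [Function.comp, id]
      rw [Nat.mul_add_div (by omega : 0 < d+1)]
      have : (1:ℕ) / (d+1) = 0 := Nat.div_eq_of_lt (by omega)
      omega
    rw [List.map_congr_left this, List.map_id]
  -- conjL : setC' ↔ setC
  have conj_mem : ∀ a ∈ setC', conjL a ∈ setC := by
    rintro a ⟨hp, hcon⟩
    refine ⟨conjL_isPartition hp, ?_⟩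
    rw [conjL_length, conjL_headI hp]
    exact hcon
  have conj_mem' : ∀ c ∈ setC, conjL c ∈ setC' := by
    rintro c ⟨hp, hcon⟩
    refine ⟨conjL_isPartition hp, ?_⟩
    rw [conjL_length, conjL_headI hp]
    exact hcon
  -- stair : setC → setB
  have stair_mem : ∀ c ∈ setC, stair d c ∈ setB := by
    rintro c ⟨⟨hne, hs, hpos⟩, hcon⟩
    have hlen : 1 ≤ c.length := List.length_pos_iff.2 hne
    have hh1 : 0 < c.headI := hpos _ (headI_mem hne)
    have hgap := stair_gap (d := d) hs
    refine ⟨⟨?_, ?_, ?_⟩, ?_, hgap⟩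
    · intro hc
      have := stair_length d c
      rw [hc] at this; simp at this; omega
    · exact sorted_of_adjacent (fun i hi => by have := hgap i hi; omega)
    · intro x hx
      rw [stair, List.mem_map] at hx
      obtain ⟨t, ht, rfl⟩ := hx
      rw [List.mem_range] at ht
      have := hpos _ (getD_mem ht)
      omega
    · simp only [perim, stair_headI hne, stair_length]
      have : (d+1) * (c.length - 1) = d * (c.length - 1) + (c.length - 1) := by ring
      omega
  -- destair : setB → setC
  have destair_mem : ∀ l ∈ setB, destair d l ∈ setC := by
    rintro l ⟨⟨hne, hs, hpos⟩, hper, hgap⟩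
    have hlen : 1 ≤ l.length := List.length_pos_iff.2 hne
    have hlow : ∀ t, t < l.length → d * (l.length - 1 - t) + 1 ≤ l.getD t 0 := by
      intro t ht
      exact gap_lower hpos hgap (l.length - 1 - t) t (by omega)
    refine ⟨⟨?_, ?_, ?_⟩, ?_⟩
    · intro hc
      have := destair_length d l
      rw [hc] at this; simp at this; omega
    · apply sorted_of_adjacent
      intro i hi
      rw [destair_length] at hi
      rw [destair_getD (by omega : i < l.length), destair_getD (by omega : i+1 < l.length)]
      have h1 := hgap i hi
      have h2 := hlow (i+1) (by omega)
      have hm : d * (l.length - 1 - i) = d * (l.length - 1 - (i+1)) + d := by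
        have : l.length - 1 - i = (l.length - 1 - (i+1)) + 1 := by omega
        rw [this, Nat.mul_succ]
      omega
    · intro x hx
      rw [destair, List.mem_map] at hx
      obtain ⟨t, ht, rfl⟩ := hx
      rw [List.mem_range] at ht
      have := hlow t ht
      omega
    · rw [destair_length, destair_headI hne]
      have h0 := hlow 0 (by omega)
      rw [← headI_eq_getD hne] at h0
      simp only [Nat.sub_zero] at h0
      simp only [perim] at hper
      have : (d+1) * (l.length - 1) = d * (l.length - 1) + (l.length - 1) := by ring
      omega
  -- assemble
  have himg1 : qmap d '' setA = setC' := by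
    apply Set.Subset.antisymm
    · rintro _ ⟨l, hl, rfl⟩; exact qmap_mem l hl
    · intro a ha
      exact ⟨unq d a, unq_mem a ha, qmap_unq a ha⟩
  have hinj1 : Set.InjOn (qmap d) setA := by
    intro x hx y hy hxy
    rw [← unq_qmap x hx, ← unq_qmap y hy, hxy]
  have himg2 : conjL '' setC' = setC := by
    apply Set.Subset.antisymm
    · rintro _ ⟨a, ha, rfl⟩; exact conj_mem a ha
    · intro c hc
      exact ⟨conjL c, conj_mem' c hc, conjL_conjL hc.1⟩
  have hinj2 : Set.InjOn conjL setC' := by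
    intro x hx y hy hxy
    rw [← conjL_conjL hx.1, ← conjL_conjL hy.1, hxy]
  have himg3 : stair d '' setC = setB := by
    apply Set.Subset.antisymm
    · rintro _ ⟨c, hc, rfl⟩; exact stair_mem c hc
    · intro l hl
      exact ⟨destair d l, destair_mem l hl,
        stair_destair hl.1.2.2 hl.2.2⟩
  have hinj3 : Set.InjOn (stair d) setC := by
    intro x hx y hy hxy
    rw [← destair_stair (d := d) (c := x), ← destair_stair (d := d) (c := y), hxy]
  calc setA.ncard = (qmap d '' setA).ncard := (Set.ncard_image_of_injOn hinj1).symm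
    _ = setC'.ncard := by rw [himg1]
    _ = (conjL '' setC').ncard := (Set.ncard_image_of_injOn hinj2).symm
    _ = setC.ncard := by rw [himg2]
    _ = (stair d '' setC).ncard := (Set.ncard_image_of_injOn hinj3).symm
    _ = setB.ncard := by rw [himg3]
end

section
/- The generating function Σ_λ p^{rep(λ)} x^{Γ(λ)}, summed over all nonempty integer partitions, equals x / (1 − (1+p)x − (1−p)x²), and the same holds with rep replaced by even. -/
def decode : List Bool → List ℕ
  | [] => [1]
  | (true :: w) => (decode w).headI :: decode w
  | (false :: w) => ((decode w).headI + 1) :: (decode w).tail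

lemma decode_ne_nil (w : List Bool) : decode w ≠ [] := by
  cases w with
  | nil => simp [decode]
  | cons b w => cases b <;> simp [decode]

lemma head_decode (w : List Bool) : (decode w).headI = w.count false + 1 := by
  induction w with
  | nil => simp [decode]
  | cons b w ih => cases b <;> simp [decode, ih, List.count_cons]

lemma length_decode (w : List Bool) : (decode w).length = w.count true + 1 := by
  induction w with
  | nil => simp [decode]
  | cons b w ih =>
      cases b <;> simp [decode, List.count_cons, List.length_tail, ih]

lemma count_tf (w : List Bool) : w.count false + w.count true = w.length := by
  induction w with
  | nil => simp
  | cons b w ih => cases b <;> simp [List.count_cons] <;> omega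

lemma decode_cons_head_tail (w : List Bool) :
    decode w = (decode w).headI :: (decode w).tail := by
  have := decode_ne_nil w
  cases h : decode w with
  | nil => exact absurd h this
  | cons a t => simp

lemma le_head_of_mem {l : List ℕ} (hs : l.Pairwise (· ≥ ·)) {b : ℕ} (hb : b ∈ l) : b ≤ l.headI := by
  cases l with
  | nil => simp at hb
  | cons a t =>
      rcases List.mem_cons.mp hb with h | h
      · simp [h]
      · exact (List.pairwise_cons.mp hs).1 b h

lemma decode_isPartition (w : List Bool) :
    IsPartition (decode w) ∧ perim (decode w) = w.length + 1 := by
  have hp : IsPartition (decode w) := by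
    induction w with
    | nil => refine ⟨by simp [decode], by simp [decode], by simp [decode]⟩
    | cons b w ih =>
        obtain ⟨hne, hs, hpos⟩ := ih
        cases b with
        | true =>
            refine ⟨by simp [decode], ?_, ?_⟩
            · rw [decode, List.pairwise_cons]
              exact ⟨fun b hb => le_head_of_mem hs hb, hs⟩
            · intro x hx
              rw [decode] at hx
              rcases List.mem_cons.mp hx with h | h
              · subst h; rw [head_decode]; omega
              · exact hpos x h
        | false =>
            have hs' : ((decode w).headI :: (decode w).tail).Pairwise (· ≥ ·) := by
              rw [← decode_cons_head_tail w]; exact hs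
            refine ⟨by simp [decode], ?_, ?_⟩
            · rw [decode, List.pairwise_cons]
              refine ⟨fun b hb => ?_, (List.pairwise_cons.mp hs').2⟩
              have := (List.pairwise_cons.mp hs').1 b hb
              omega
            · intro x hx
              rw [decode] at hx
              rcases List.mem_cons.mp hx with h | h
              · omega
              · exact hpos x (List.mem_of_mem_tail h)
  refine ⟨hp, ?_⟩
  rw [perim, head_decode, length_decode]
  have := count_tf w
  omega

def encode : List ℕ → List Bool
  | a :: b :: t => if a ≤ b then true :: encode (b :: t) else false :: encode ((a-1) :: b :: t)
  | [a] => if a ≤ 1 then [] else false :: encode [a-1]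
  | [] => []
  termination_by l => l.sum + l.length
  decreasing_by
  · simp; omega
  · simp; omega
  · simp; omega

lemma encode_decode (w : List Bool) : encode (decode w) = w := by
  induction w with
  | nil => simp [decode, encode]
  | cons b w ih =>
      obtain ⟨h, tl, hd⟩ : ∃ h tl, decode w = h :: tl := ⟨_, _, decode_cons_head_tail w⟩
      have hh : (decode w).headI = h := by rw [hd]; rfl
      cases b with
      | true =>
          rw [decode, hh, hd, encode, if_pos (le_refl _), ← hd, ih]
      | false =>
          rw [decode, hh, hd]
          simp only [List.tail_cons]
          cases tl with
          | nil =>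
              have hpos : 1 ≤ h := by
                have := head_decode w; rw [hh] at this; omega
              have h1 : ¬ (h + 1 ≤ 1) := by omega
              rw [encode, if_neg h1, Nat.add_sub_cancel, ← hd, ih]
          | cons c t =>
              have hc : c ≤ h := by
                have hs : (decode w).Pairwise (· ≥ ·) := (decode_isPartition w).1.2.1
                rw [hd] at hs
                exact (List.pairwise_cons.mp hs).1 c (by simp)
              have h1 : ¬ (h + 1 ≤ c) := by omega
              rw [encode, if_neg h1, Nat.add_sub_cancel, ← hd, ih]

lemma decode_injective : Function.Injective decode :=
  Function.LeftInverse.injective encode_decode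

lemma decode_encode {l : List ℕ} (hl : IsPartition l) : decode (encode l) = l := by
  induction l using encode.induct with
  | case1 a b t hab ih =>
      have hba : b ≤ a := (List.pairwise_cons.mp hl.2.1).1 b (by simp)
      have hab' : a = b := le_antisymm hab hba
      rw [encode, if_pos hab, decode]
      have hrec : decode (encode (b :: t)) = b :: t :=
        ih ⟨by simp, (List.pairwise_cons.mp hl.2.1).2, fun x hx => hl.2.2 x (by simp [hx])⟩
      rw [hrec]
      simp [hab']
  | case2 a b t hab ih =>
      have hb1 : 0 < b := hl.2.2 b (by simp)
      have hrec : decode (encode ((a-1) :: b :: t)) = (a-1) :: b :: t := by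
        refine ih ⟨by simp, ?_, ?_⟩
        · rw [List.pairwise_cons]
          refine ⟨fun x hx => ?_, (List.pairwise_cons.mp hl.2.1).2⟩
          have hba : b ≤ a := (List.pairwise_cons.mp hl.2.1).1 b (by simp)
          rcases List.mem_cons.mp hx with h | h
          · omega
          · have : x ≤ b := (List.pairwise_cons.mp (List.pairwise_cons.mp hl.2.1).2).1 x h
            omega
        · intro x hx
          rcases List.mem_cons.mp hx with h | h
          · omega
          · exact hl.2.2 x (by simp [List.mem_cons.mp h])
      rw [encode, if_neg hab, decode, hrec]
      simp only [List.headI, List.tail_cons]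
      have : a - 1 + 1 = a := by omega
      rw [this]
  | case3 a ha =>
      have : a = 1 := by
        have := hl.2.2 a (by simp); omega
      rw [encode, if_pos ha, decode, this]
  | case4 a ha ih =>
      have hrec : decode (encode [a-1]) = [a-1] := by
        refine ih ⟨by simp, by simp, ?_⟩
        intro x hx; simp at hx; omega
      rw [encode, if_neg ha, decode, hrec]
      simp only [List.headI, List.tail_cons]
      have : a - 1 + 1 = a := by omega
      rw [this]
  | case5 => exact absurd rfl hl.1

lemma repStat_singleton (a : ℕ) : repStat [a] = 0 := by simp [repStat]

lemma repStat_cons (a b : ℕ) (t : List ℕ) :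
    repStat (a :: b :: t) = (if a = b then 1 else 0) + repStat (b :: t) := by
  unfold repStat
  simp only [List.length_cons, Nat.add_sub_cancel, List.range_succ_eq_map]
  simp only [List.filter_cons, List.filter_map, List.length_cons]
  simp [Function.comp, List.getD_cons_succ, List.getD_cons_zero]
  split <;> simp [Function.comp_def, Nat.add_comm]

lemma repStat_nil : repStat [] = 0 := by simp [repStat]

lemma tail_decode_false (w : List Bool) : (decode (false::w)).tail = (decode w).tail := by
  rw [decode]; rfl

lemma tail_decode_true (w : List Bool) : (decode (true::w)).tail = decode w := by
  rw [decode]; rfl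

lemma rep_decode_true (w : List Bool) :
    repStat (decode (true::w)) = repStat (decode w) + 1 := by
  obtain ⟨h, tl, hd⟩ : ∃ h tl, decode w = h :: tl := ⟨_, _, decode_cons_head_tail w⟩
  have hh : (decode w).headI = h := by rw [hd]; rfl
  rw [decode, hh, hd, repStat_cons, if_pos rfl, Nat.add_comm]

lemma rep_decode_false (w : List Bool) :
    repStat (decode (false::w)) = repStat ((decode w).tail) := by
  obtain ⟨h, tl, hd⟩ : ∃ h tl, decode w = h :: tl := ⟨_, _, decode_cons_head_tail w⟩
  have hh : (decode w).headI = h := by rw [hd]; rfl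
  rw [decode, hh, hd]
  simp only [List.tail_cons]
  cases tl with
  | nil => rw [repStat_singleton, repStat_nil]
  | cons c t =>
      have hc : c ≤ h := by
        have hs : (decode w).Pairwise (· ≥ ·) := (decode_isPartition w).1.2.1
        rw [hd] at hs
        exact (List.pairwise_cons.mp hs).1 c (by simp)
      rw [repStat_cons, if_neg (by omega)]
      simp

lemma rep_decode_split (w : List Bool) :
    repStat (decode w) = repStat ((decode w).tail) +
      (if w.head? = some true then 1 else 0) := by
  cases w with
  | nil => simp [decode, repStat_singleton, repStat_nil]
  | cons b v =>
      cases b with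
      | true => rw [rep_decode_true, tail_decode_true]; simp
      | false => rw [rep_decode_false, tail_decode_false]; simp

lemma evenStat_cons (a : ℕ) (l : List ℕ) :
    evenStat (a :: l) = (if a % 2 = 0 then 1 else 0) + evenStat l := by
  simp [evenStat, List.countP_cons]
  split <;> simp [Nat.add_comm]

lemma even_decode_true (w : List Bool) :
    evenStat (decode (true::w)) =
      (if (w.count false) % 2 = 1 then 1 else 0) + evenStat (decode w) := by
  rw [decode, evenStat_cons, head_decode]
  congr 1
  rcases Nat.even_or_odd (w.count false) with h | h
  · rw [Nat.even_iff] at h; rw [if_neg (by omega), if_neg (by omega)]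
  · rw [Nat.odd_iff] at h; rw [if_pos (by omega), if_pos (by omega)]

lemma even_decode_false (w : List Bool) :
    evenStat (decode (false::w)) =
      (if (w.count false) % 2 = 0 then 1 else 0) + evenStat ((decode w).tail) := by
  rw [decode, evenStat_cons, head_decode]
  congr 1
  rcases Nat.even_or_odd (w.count false) with h | h
  · rw [Nat.even_iff] at h; rw [if_pos (by omega), if_pos (by omega)]
  · rw [Nat.odd_iff] at h; rw [if_neg (by omega), if_neg (by omega)]

lemma even_decode_split (w : List Bool) :
    evenStat (decode w) =
      (if (w.count false) % 2 = 1 then 1 else 0) + evenStat ((decode w).tail) := by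
  obtain ⟨h, tl, hd⟩ : ∃ h tl, decode w = h :: tl := ⟨_, _, decode_cons_head_tail w⟩
  have hh : (decode w).headI = h := by rw [hd]; rfl
  have hcf : h = w.count false + 1 := by rw [← hh, head_decode]
  rw [hd]
  simp only [List.tail_cons]
  rw [evenStat_cons]
  congr 1
  subst hcf
  rcases Nat.even_or_odd (w.count false) with h | h
  · rw [Nat.even_iff] at h; rw [if_neg (by omega), if_neg (by omega)]
  · rw [Nat.odd_iff] at h; rw [if_pos (by omega), if_pos (by omega)]

def words : ℕ → Finset (List Bool)
  | 0 => {[]}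
  | (n+1) => (words n).image (List.cons true) ∪ (words n).image (List.cons false)

lemma mem_words {n : ℕ} {w : List Bool} : w ∈ words n ↔ w.length = n := by
  induction n generalizing w with
  | zero => cases w <;> simp [words]
  | succ n ih =>
      cases w with
      | nil => simp [words]
      | cons b v =>
          cases b <;> simp [words, ih]

lemma sum_words_split {M : Type*} [AddCommMonoid M] (n : ℕ) (F : List Bool → M) :
    ∑ w ∈ words (n+1), F w =
      (∑ v ∈ words n, F (true :: v)) + ∑ v ∈ words n, F (false :: v) := by
  rw [words, Finset.sum_union, Finset.sum_image (by intros; simp_all),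
    Finset.sum_image (by intros; simp_all)]
  rw [Finset.disjoint_left]
  rintro a ha hb
  simp only [Finset.mem_image] at ha hb
  obtain ⟨_, _, rfl⟩ := ha
  obtain ⟨_, _, h⟩ := hb
  simp at h

open Polynomial in
noncomputable def G (n : ℕ) : Polynomial ℤ := ∑ w ∈ words n, X ^ repStat (decode w)
open Polynomial in
noncomputable def Gf (n : ℕ) : Polynomial ℤ := ∑ v ∈ words n, X ^ repStat (decode (false :: v))

open Polynomial in
lemma G_succ (n : ℕ) : G (n+1) = X * G n + Gf n := by
  rw [G, sum_words_split, G, Gf, Finset.mul_sum]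
  congr 1
  refine Finset.sum_congr rfl fun v _ => ?_
  rw [rep_decode_true, pow_succ, mul_comm]

open Polynomial in
lemma Gf_succ (n : ℕ) : Gf (n+1) = G n + Gf n := by
  rw [Gf]
  have : ∀ v : List Bool, (X : Polynomial ℤ) ^ repStat (decode (false :: v)) =
      X ^ repStat ((decode v).tail) := fun v => by rw [rep_decode_false]
  calc ∑ v ∈ words (n+1), (X : Polynomial ℤ) ^ repStat (decode (false :: v))
      = ∑ v ∈ words (n+1), (X : Polynomial ℤ) ^ repStat ((decode v).tail) := by
        refine Finset.sum_congr rfl fun v _ => this v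
    _ = (∑ u ∈ words n, (X : Polynomial ℤ) ^ repStat ((decode (true :: u)).tail))
        + ∑ u ∈ words n, (X : Polynomial ℤ) ^ repStat ((decode (false :: u)).tail) :=
        sum_words_split n _
    _ = G n + Gf n := by
        congr 1
        all_goals refine Finset.sum_congr rfl fun u _ => ?_
        all_goals simp only [tail_decode_true, tail_decode_false, ← rep_decode_false]

open Polynomial in
noncomputable def fpol : ℕ → Polynomial ℤ
  | 0 => 0
  | 1 => 1
  | (n+2) => (1 + X) * fpol (n+1) + (1 - X) * fpol n

open Polynomial in
lemma G_eq_fpol (n : ℕ) : G n = fpol (n+1) := by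
  have hG0 : G 0 = 1 := by simp [G, words, decode, repStat_singleton]
  have hGf0 : Gf 0 = 1 := by
    simp [Gf, words, rep_decode_false, decode, repStat_nil, repStat_singleton]
  have key : ∀ n, G n = fpol (n+1) ∧ G (n+1) = fpol (n+2) := by
    intro n
    induction n with
    | zero =>
        refine ⟨by rw [hG0]; rfl, ?_⟩
        rw [G_succ, hG0, hGf0]
        show X * 1 + 1 = (1 + X) * fpol 1 + (1 - X) * fpol 0
        rw [show fpol 1 = 1 from rfl, show fpol 0 = 0 from rfl]
        ring
    | succ n ih =>
        refine ⟨ih.2, ?_⟩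
        have hGf : Gf (n+1) = G n + (G (n+1) - X * G n) := by
          rw [Gf_succ]
          have : Gf n = G (n+1) - X * G n := by rw [G_succ]; ring
          rw [this]
        rw [G_succ, hGf]
        show _ = (1 + X) * fpol (n+2) + (1 - X) * fpol (n+1)
        rw [ih.1, ih.2]
        ring
  exact (key n).1

open Polynomial

noncomputable def Te (n : ℕ) : Polynomial ℤ :=
  ∑ v ∈ words n, if v.count false % 2 = 0 then X ^ evenStat ((decode v).tail) else 0
noncomputable def To (n : ℕ) : Polynomial ℤ :=
  ∑ v ∈ words n, if v.count false % 2 = 1 then X ^ evenStat ((decode v).tail) else 0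
noncomputable def E (n : ℕ) : Polynomial ℤ := ∑ v ∈ words n, X ^ evenStat (decode v)

lemma E_eq (n : ℕ) : E n = X * To n + Te n := by
  rw [E, To, Te, Finset.mul_sum, ← Finset.sum_add_distrib]
  refine Finset.sum_congr rfl fun v _ => ?_
  rw [even_decode_split v]
  rcases Nat.even_or_odd (v.count false) with h | h
  · rw [Nat.even_iff] at h
    rw [if_neg (by omega), if_neg (by omega), if_pos (by omega), mul_zero]
    ring
  · rw [Nat.odd_iff] at h
    rw [if_pos (by omega), if_pos (by omega), if_neg (by omega), pow_add, pow_one]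
    ring

lemma To_succ (n : ℕ) : To (n+1) = X * To n + Te n := by
  rw [To, sum_words_split, To, Te, Finset.mul_sum]
  congr 1
  · refine Finset.sum_congr rfl fun u _ => ?_
    rcases Nat.even_or_odd (u.count false) with h | h
    · rw [Nat.even_iff] at h
      simp [tail_decode_true, even_decode_split, List.count_cons, h, Nat.add_mod,
        pow_add, pow_succ, mul_comm]
    · rw [Nat.odd_iff] at h
      simp [tail_decode_true, even_decode_split, List.count_cons, h, Nat.add_mod,
        pow_add, pow_succ, mul_comm]
  · refine Finset.sum_congr rfl fun u _ => ?_
    rcases Nat.even_or_odd (u.count false) with h | h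
    · rw [Nat.even_iff] at h
      simp [tail_decode_false, List.count_cons, h, Nat.add_mod]
    · rw [Nat.odd_iff] at h
      simp [tail_decode_false, List.count_cons, h, Nat.add_mod]

lemma Te_succ (n : ℕ) : Te (n+1) = Te n + To n := by
  rw [Te, sum_words_split, Te, To]
  congr 1
  · refine Finset.sum_congr rfl fun u _ => ?_
    rcases Nat.even_or_odd (u.count false) with h | h
    · rw [Nat.even_iff] at h
      simp [tail_decode_true, even_decode_split, List.count_cons, h, Nat.add_mod]
    · rw [Nat.odd_iff] at h
      simp [tail_decode_true, even_decode_split, List.count_cons, h, Nat.add_mod]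
  · refine Finset.sum_congr rfl fun u _ => ?_
    rcases Nat.even_or_odd (u.count false) with h | h
    · rw [Nat.even_iff] at h
      simp [tail_decode_false, List.count_cons, h, Nat.add_mod]
    · rw [Nat.odd_iff] at h
      simp [tail_decode_false, List.count_cons, h, Nat.add_mod]

lemma E_succ (n : ℕ) : E (n+1) = (X^2 + 1) * To n + (X + 1) * Te n := by
  rw [E, sum_words_split]
  have h1 : ∑ u ∈ words n, (X : Polynomial ℤ) ^ evenStat (decode (true :: u))
      = X^2 * To n + Te n := by
    rw [To, Te, Finset.mul_sum, ← Finset.sum_add_distrib]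
    refine Finset.sum_congr rfl fun u _ => ?_
    rcases Nat.even_or_odd (u.count false) with h | h
    · rw [Nat.even_iff] at h
      simp [even_decode_true, tail_decode_true, even_decode_split, List.count_cons, h,
        Nat.add_mod, pow_add, pow_succ]
    · rw [Nat.odd_iff] at h
      simp [even_decode_true, tail_decode_true, even_decode_split, List.count_cons, h,
        Nat.add_mod, pow_add, pow_succ]
      ring
  have h2 : ∑ u ∈ words n, (X : Polynomial ℤ) ^ evenStat (decode (false :: u))
      = X * Te n + To n := by
    rw [To, Te, Finset.mul_sum, ← Finset.sum_add_distrib]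
    refine Finset.sum_congr rfl fun u _ => ?_
    rcases Nat.even_or_odd (u.count false) with h | h
    · rw [Nat.even_iff] at h
      simp [even_decode_false, tail_decode_false, List.count_cons, h, Nat.add_mod,
        pow_add, pow_succ]
    · rw [Nat.odd_iff] at h
      simp [even_decode_false, tail_decode_false, List.count_cons, h, Nat.add_mod]
  rw [h1, h2]
  ring

lemma E_eq_fpol (n : ℕ) : E n = fpol (n+1) := by
  have hE0 : E 0 = 1 := by simp [E, words, decode, evenStat]
  have hTo0 : To 0 = 0 := by simp [To, words]
  have hTe0 : Te 0 = 1 := by simp [Te, words, decode, evenStat]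
  have hrec : ∀ n, E (n+2) = (1 + X) * E (n+1) + (1 - X) * E n := by
    intro n
    rw [show n+2 = (n+1)+1 from rfl, E_succ (n+1), To_succ, Te_succ, E_succ n, E_eq n]
    ring
  have key : ∀ n, E n = fpol (n+1) ∧ E (n+1) = fpol (n+2) := by
    intro n
    induction n with
    | zero =>
        refine ⟨by rw [hE0]; rfl, ?_⟩
        rw [E_succ, hTo0, hTe0]
        show (X^2+1) * 0 + (X+1) * 1 = (1 + X) * fpol 1 + (1 - X) * fpol 0
        rw [show fpol 1 = 1 from rfl, show fpol 0 = 0 from rfl]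
        ring
    | succ n ih =>
        refine ⟨ih.2, ?_⟩
        rw [hrec n, ih.1, ih.2]
        show _ = (1 + X) * fpol (n+2) + (1 - X) * fpol (n+1)
        ring
  exact (key n).1

lemma set_eq_image (n : ℕ) :
    {l : List ℕ | IsPartition l ∧ perim l = n + 1} = ↑((words n).image decode) := by
  ext l
  simp only [Set.mem_setOf_eq, Finset.coe_image, Set.mem_image, Finset.mem_coe, mem_words]
  constructor
  · rintro ⟨hp, hperim⟩
    refine ⟨encode l, ?_, decode_encode hp⟩
    have h1 := (decode_isPartition (encode l)).2
    rw [decode_encode hp] at h1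
    omega
  · rintro ⟨w, hw, rfl⟩
    have := decode_isPartition w
    exact ⟨this.1, by rw [this.2, hw]⟩

lemma set_eq_zero :
    {l : List ℕ | IsPartition l ∧ perim l = 0} = (∅ : Set (List ℕ)) := by
  ext l
  simp only [Set.mem_setOf_eq, Set.mem_empty_iff_false, iff_false]
  rintro ⟨⟨hne, hs, hpos⟩, hperim⟩
  cases l with
  | nil => exact hne rfl
  | cons a t =>
      have : 0 < a := hpos a (by simp)
      simp only [perim, List.headI, List.length_cons] at hperim
      omega

open Polynomial in
lemma finsum_rep (n : ℕ) :
    ∑ᶠ l ∈ {l : List ℕ | IsPartition l ∧ perim l = n}, (X : Polynomial ℤ) ^ repStat l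
      = fpol n := by
  cases n with
  | zero => rw [set_eq_zero, finsum_mem_empty]; rfl
  | succ n =>
      rw [set_eq_image, finsum_mem_coe_finset,
        Finset.sum_image (fun x _ y _ h => decode_injective h), ← G, G_eq_fpol]

open Polynomial in
lemma finsum_even (n : ℕ) :
    ∑ᶠ l ∈ {l : List ℕ | IsPartition l ∧ perim l = n}, (X : Polynomial ℤ) ^ evenStat l
      = fpol n := by
  cases n with
  | zero => rw [set_eq_zero, finsum_mem_empty]; rfl
  | succ n =>
      rw [set_eq_image, finsum_mem_coe_finset,
        Finset.sum_image (fun x _ y _ h => decode_injective h), ← E, E_eq_fpol]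


open PowerSeries

theorem ps_key (a : ℕ → Polynomial ℤ) (h0 : a 0 = 0) (h1 : a 1 = 1)
    (hrec : ∀ n, a (n+2) = (1 + Polynomial.X) * a (n+1) + (1 - Polynomial.X) * a n) :
    (PowerSeries.mk a) *
      (1 - PowerSeries.C (1 + Polynomial.X) * PowerSeries.X
         - PowerSeries.C (1 - Polynomial.X) * PowerSeries.X ^ 2) = PowerSeries.X := by
  have e1 : (PowerSeries.mk a) *
      (1 - PowerSeries.C (1 + Polynomial.X) * PowerSeries.X
         - PowerSeries.C (1 - Polynomial.X) * PowerSeries.X ^ 2)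
      = PowerSeries.mk a - PowerSeries.C (1 + Polynomial.X) * (PowerSeries.mk a * PowerSeries.X)
        - PowerSeries.C (1 - Polynomial.X) * (PowerSeries.mk a * PowerSeries.X ^ 2) := by ring
  rw [e1]
  refine PowerSeries.ext fun n => ?_
  simp only [LinearMap.map_sub, PowerSeries.coeff_C_mul]
  match n with
  | 0 => simp [h0]
  | 1 =>
      rw [PowerSeries.coeff_succ_mul_X, PowerSeries.coeff_mul_X_pow']
      simp [h1, h0]
  | (n+2) =>
      rw [PowerSeries.coeff_succ_mul_X, PowerSeries.coeff_mul_X_pow']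
      simp only [PowerSeries.coeff_mk, PowerSeries.coeff_X]
      rw [if_pos (by omega : 2 ≤ n + 2)]
      simp only [PowerSeries.coeff_mk, Nat.add_sub_cancel]
      rw [hrec n]
      simp only [if_neg (by omega : ¬ n + 2 = 1)]
      ring


theorem gen_fun_rep_and_even :
    letI p : Polynomial ℤ := Polynomial.X
    ((PowerSeries.mk fun n =>
        ∑ᶠ l ∈ {l : List ℕ | IsPartition l ∧ perim l = n}, p ^ repStat l) *
      (1 - PowerSeries.C (1 + p) * PowerSeries.X
         - PowerSeries.C (1 - p) * PowerSeries.X ^ 2) = PowerSeries.X) ∧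
    ((PowerSeries.mk fun n =>
        ∑ᶠ l ∈ {l : List ℕ | IsPartition l ∧ perim l = n}, p ^ evenStat l) *
      (1 - PowerSeries.C (1 + p) * PowerSeries.X
         - PowerSeries.C (1 - p) * PowerSeries.X ^ 2) = PowerSeries.X) := by
  have hrec : ∀ (a : ℕ → Polynomial ℤ), (∀ n, a n = fpol n) →
      (a 0 = 0 ∧ a 1 = 1 ∧
        ∀ n, a (n+2) = (1 + Polynomial.X) * a (n+1) + (1 - Polynomial.X) * a n) := by
    intro a ha
    refine ⟨by rw [ha]; rfl, by rw [ha]; rfl, fun n => ?_⟩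
    rw [ha, ha, ha]
    rfl
  obtain ⟨h0, h1, h2⟩ := hrec _ finsum_rep
  obtain ⟨g0, g1, g2⟩ := hrec _ finsum_even
  exact ⟨ps_key _ h0 h1 h2, ps_key _ g0 g1 g2⟩
end
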